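/- Let C be a reduced combinatorial code on n neurons that is intersection-complete, and let m = |C|. Then the Boolean rank of C equals min(m, n): there exist sets η_1,…,η_r ⊆ [n] with r = min(m,n) such that every codeword of C is a union of a subfamily of {η_1,…,η_r}, and no such family with r < min(m,n) sets exists. -/

import Mathlib

/-- The trunk of `τ` in the code `C`: all codewords containing `τ`. -/
def trunk {n : ℕ} (C : Finset (Finset (Fin n))) (τ : Finset (Fin n)) :
    Finset (Finset (Fin n)) :=
  C.filter (fun σ => τ ⊆ σ)

/-- A code is reduced if it has no trivial neurons (empty trunks) and no
redundant neurons. -/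
def Reduced {n : ℕ} (C : Finset (Finset (Fin n))) : Prop :=
  (∀ i : Fin n, (trunk C {i}).Nonempty) ∧
    ∀ i : Fin n, ¬ ∃ σ : Finset (Fin n), i ∉ σ ∧ trunk C {i} = trunk C σ

/-- A code is intersection-complete if it is closed under pairwise
intersections. -/
def IntersectionComplete {n : ℕ} (C : Finset (Finset (Fin n))) : Prop :=
  ∀ σ ∈ C, ∀ τ ∈ C, σ ∩ τ ∈ C

lemma inf'_mem_of_ic {n : ℕ} (C : Finset (Finset (Fin n)))
    (hic : IntersectionComplete C) :
    ∀ (s : Finset (Finset (Fin n))) (hs : s.Nonempty),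
      (∀ x ∈ s, x ∈ C) → s.inf' hs id ∈ C := by
  intro s hs
  induction hs using Finset.Nonempty.cons_induction with
  | singleton a => intro h; simpa using h a (by simp)
  | cons a s ha hs ih =>
      intro h
      rw [Finset.inf'_cons hs]
      have h1 : a ∈ C := h a (Finset.mem_cons_self _ _)
      have h2 : s.inf' hs id ∈ C := ih fun x hx => h x (Finset.mem_cons.2 (Or.inr hx))
      simpa [Finset.inf_eq_inter] using hic a h1 _ h2

/-- An intersection-complete reduced code `C` with `m` codewords on `n` neurons
has Boolean rank exactly `min m n`: the least `r` for which there are sets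
`η 1, …, η r ⊆ [n]` such that every codeword of `C` is a union of a (possibly
empty) subfamily of them is `min m n`. -/
theorem brank_of_intersectionComplete (n : ℕ) (C : Finset (Finset (Fin n)))
    (hred : Reduced C) (hic : IntersectionComplete C) :
    IsLeast {r : ℕ | ∃ η : Fin r → Finset (Fin n),
        ∀ c ∈ C, ∃ ξ : Finset (Fin r), c = ξ.sup η}
      (min C.card n) := by
  classical
  set A : Fin n → Finset (Fin n) := fun i => (trunk C {i}).inf' (hred.1 i) id with hA
  have hmemtrunk : ∀ (i : Fin n) (σ : Finset (Fin n)),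
      σ ∈ trunk C {i} ↔ σ ∈ C ∧ i ∈ σ := by
    intro i σ; simp [trunk, Finset.singleton_subset_iff]
  have hmemA : ∀ i, i ∈ A i := by
    intro i
    have : ({i} : Finset (Fin n)) ≤ A i := by
      apply Finset.le_inf'
      intro σ hσ
      simpa [Finset.singleton_subset_iff] using ((hmemtrunk i σ).1 hσ).2
    simpa [Finset.singleton_subset_iff] using this
  have hAle : ∀ (i : Fin n) (σ : Finset (Fin n)), σ ∈ C → i ∈ σ → A i ⊆ σ := by
    intro i σ hσ hiσ
    exact Finset.inf'_le id ((hmemtrunk i σ).2 ⟨hσ, hiσ⟩)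
  have hAinC : ∀ i, A i ∈ C := by
    intro i
    exact inf'_mem_of_ic C hic _ (hred.1 i)
      (fun x hx => ((hmemtrunk i x).1 hx).1)
  have hiff : ∀ (i : Fin n) (σ : Finset (Fin n)), σ ∈ C → (i ∈ σ ↔ A i ⊆ σ) := by
    intro i σ hσ
    exact ⟨hAle i σ hσ, fun h => h (hmemA i)⟩
  have hinj : Function.Injective A := by
    intro i i' h
    by_contra hne
    apply hred.2 i
    refine ⟨{i'}, by simpa using hne, ?_⟩
    ext σ
    rw [hmemtrunk i σ]
    simp only [trunk, Finset.mem_filter, Finset.singleton_subset_iff]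
    constructor
    · rintro ⟨hσ, hi⟩
      exact ⟨hσ, (hiff i' σ hσ).2 (h ▸ hAle i σ hσ hi)⟩
    · rintro ⟨hσ, hi'⟩
      exact ⟨hσ, (hiff i σ hσ).2 (h ▸ hAle i' σ hσ hi')⟩
  have hnm : n ≤ C.card := by
    have := Finset.card_le_card_of_injOn (s := Finset.univ) (t := C) A
      (fun i _ => hAinC i) (hinj.injOn)
    simpa using this
  rw [min_eq_right hnm]
  constructor
  · refine ⟨A, fun c hc => ⟨c, ?_⟩⟩
    apply Finset.Subset.antisymm
    · intro x hx
      exact Finset.mem_sup.2 ⟨x, hx, hmemA x⟩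
    · exact Finset.sup_le fun i hi => hAle i c hc hi
  · rintro r ⟨η, hη⟩
    choose ξ hξ using fun i => hη (A i) (hAinC i)
    have hex : ∀ i : Fin n, ∃ j : Fin r, i ∈ η j ∧ η j ⊆ A i := by
      intro i
      have hi : i ∈ (ξ i).sup η := (hξ i) ▸ hmemA i
      obtain ⟨j, hj, hij⟩ := Finset.mem_sup.1 hi
      exact ⟨j, hij, by rw [hξ i]; exact Finset.le_sup (f := η) hj⟩
    choose f hf1 hf2 using hex
    have hfinj : Function.Injective f := by
      intro i i' h
      apply hinj
      apply Finset.Subset.antisymm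
      · apply hAle i (A i') (hAinC i')
        exact hf2 i' (h ▸ hf1 i)
      · apply hAle i' (A i) (hAinC i)
        exact hf2 i (h ▸ hf1 i')
    simpa using Fintype.card_le_of_injective f hfinj
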